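/- Let d be a natural number with d > 4. On ℝ^d define the inversion ι(x) = (x₁, −x₂, …, −x_d)/(x₁² + ⋯ + x_d²) for x ≠ 0 (and ι(0) = 0), let a = (0, 1, 1, …, 1), and define the sequence w₁ = a, w_{n+1} = a + ι(w_n). Then w_n ≠ 0 for every n ≥ 1; that is, a + [a, …, a] ≠ 0 for continued fractions with all digits equal to a of arbitrary length. (Proposition 5.2: no analogue of the quaternionic identities exists in dimension greater than 4.) -/
import Mathlib


/-- The inversion `ι(x) = (x₁, −x₂, …, −x_d)/(x₁² + ⋯ + x_d²)` on `ℝ^d`, with `ι(0) = 0`. -/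
noncomputable def iotaInv (d : ℕ) (x : Fin d → ℝ) : Fin d → ℝ :=
  if x = 0 then 0
  else fun i => (if (i : ℕ) = 0 then x i else -x i) / ∑ j, x j ^ 2

/-- The point `a = (0, 1, 1, …, 1) ∈ ℝ^d`. -/
def aVec (d : ℕ) : Fin d → ℝ := fun i => if (i : ℕ) = 0 then 0 else 1

lemma sum_sq_const (d : ℕ) (hd : 0 < d) (y : ℝ) :
    ∑ j : Fin d, (if (j : ℕ) = 0 then (0:ℝ) else y) ^ 2 = (d : ℝ) * y ^ 2 - y ^ 2 := by
  have : ∀ j : Fin d, (if (j : ℕ) = 0 then (0:ℝ) else y) ^ 2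
      = y ^ 2 - (if j = ⟨0, hd⟩ then y ^ 2 else 0) := by
    intro j
    by_cases h : (j : ℕ) = 0
    · simp [h, Fin.ext_iff]
    · simp [h, Fin.ext_iff]
  rw [Finset.sum_congr rfl (fun j _ => this j), Finset.sum_sub_distrib]
  simp [Finset.sum_ite_eq', mul_comm]

/-- Proposition 5.2: for `d > 4`, the continued fraction `a + [a, …, a]` never
vanishes; i.e. the sequence `w₁ = a`, `w_{n+1} = a + ι(w_n)` satisfies `w_n ≠ 0`. -/
theorem no_quaternionic_identity_high_dim (d : ℕ) (hd : 4 < d)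
    (w : ℕ → Fin d → ℝ) (h1 : w 1 = aVec d)
    (hrec : ∀ n : ℕ, 1 ≤ n → w (n + 1) = aVec d + iotaInv d (w n)) :
    ∀ n : ℕ, 1 ≤ n → w n ≠ 0 := by
  have hd0 : 0 < d := by omega
  have hd1 : 1 < d := by omega
  have hdR : (5 : ℝ) ≤ (d : ℝ) := by exact_mod_cast (by omega : 5 ≤ d)
  have key : ∀ n : ℕ, 1 ≤ n → ∃ y : ℝ, 1/2 ≤ y ∧
      w n = fun i : Fin d => if (i : ℕ) = 0 then (0:ℝ) else y := by
    intro n hn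
    induction n, hn using Nat.le_induction with
    | base =>
      exact ⟨1, by norm_num, by rw [h1]; rfl⟩
    | succ n hn ih =>
      obtain ⟨y, hy, hwn⟩ := ih
      have hy0 : (0:ℝ) < y := by linarith
      -- w n ≠ 0
      have hne : w n ≠ 0 := by
        intro h
        have := congrFun h ⟨1, hd1⟩
        rw [hwn] at this
        simp at this
        linarith
      set S : ℝ := (d : ℝ) * y ^ 2 - y ^ 2 with hSdef
      have hSsum : ∑ j, w n j ^ 2 = S := by
        rw [hwn]; exact sum_sq_const d hd0 y
      have hS1 : (1:ℝ) ≤ S := by nlinarith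
      have hS0 : S ≠ 0 := by linarith
      refine ⟨1 - y / S, ?_, ?_⟩
      · have : y / S ≤ 1/2 := by
          rw [div_le_iff₀ (by linarith)]
          nlinarith
        linarith
      · have hiota : iotaInv d (w n)
            = fun i : Fin d => (if (i : ℕ) = 0 then w n i else -w n i) / S := by
          simp only [iotaInv, if_neg hne, hSsum]
        rw [hrec n hn]
        funext i
        rw [hiota]
        simp only [Pi.add_apply, aVec, hwn]
        by_cases hi : (i : ℕ) = 0
        · simp [hi]
        · simp [hi]
          ring
  intro n hn h
  obtain ⟨y, hy, hwn⟩ := key n hn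
  have := congrFun h ⟨1, hd1⟩
  rw [hwn] at this
  simp at this
  linarith
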